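/- There exists a constant C > 0 depending only on q such that the following holds: for every polynomial r of degree at most q with ∫ r dγ = 0 and ∫ r² dγ = 1, and every real number d ≥ 2, we have γ({z ∈ ℝ : |r(z)| ≥ C (log d)^{q/2}}) ≤ 1/d. -/

import Mathlib

open MeasureTheory ProbabilityTheory Real Set

open MeasureTheory ProbabilityTheory Real Set

lemma pow_mul_exp_bound (k : ℕ) (x : ℝ) :
    |x ^ k * Real.exp (-(x ^ 2) / 2)| ≤
      Real.exp (-(2⁻¹ : ℝ) * x ^ 2) + 4 ^ k * k.factorial * Real.exp (-(4⁻¹ : ℝ) * x ^ 2) := by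
  have h1 : |x ^ k * Real.exp (-(x ^ 2) / 2)| = |x| ^ k * Real.exp (-(x ^ 2) / 2) := by
    rw [abs_mul, abs_pow, abs_of_pos (Real.exp_pos _)]
  rw [h1]
  have hk : |x| ^ k ≤ 1 + 4 ^ k * k.factorial * Real.exp ((4⁻¹ : ℝ) * x ^ 2) := by
    rcases le_or_gt (|x|) 1 with h | h
    · have : |x| ^ k ≤ 1 := pow_le_one₀ (abs_nonneg x) h
      have : (0:ℝ) ≤ 4 ^ k * k.factorial * Real.exp ((4⁻¹ : ℝ) * x ^ 2) := by positivity
      linarith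
    · have h2 : |x| ^ k ≤ |x| ^ (2 * k) := pow_le_pow_right₀ h.le (by omega)
      have h3 : |x| ^ (2 * k) = (4:ℝ) ^ k * ((4⁻¹ : ℝ) * x ^ 2) ^ k := by
        rw [pow_mul, sq_abs, ← mul_pow]
        congr 1
        ring
      have h4 : ((4⁻¹ : ℝ) * x ^ 2) ^ k ≤ k.factorial * Real.exp ((4⁻¹ : ℝ) * x ^ 2) := by
        have := Real.pow_div_factorial_le_exp (x := (4⁻¹ : ℝ) * x ^ 2) (by positivity) k
        have hf : (0:ℝ) < k.factorial := by exact_mod_cast k.factorial_pos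
        rw [div_le_iff₀ hf] at this
        linarith [this]
      have h5 : |x| ^ (2*k) ≤ 4 ^ k * (k.factorial * Real.exp ((4⁻¹ : ℝ) * x ^ 2)) := by
        rw [h3]
        exact mul_le_mul_of_nonneg_left h4 (by positivity)
      nlinarith [Real.exp_pos ((4⁻¹ : ℝ) * x ^ 2)]
  have he : Real.exp (-(x^2)/2) = Real.exp (-(2⁻¹:ℝ) * x ^ 2) := by ring_nf
  rw [he]
  have hposE : (0:ℝ) < Real.exp (-(2⁻¹:ℝ) * x ^ 2) := Real.exp_pos _
  calc |x| ^ k * Real.exp (-(2⁻¹:ℝ) * x ^ 2)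
      ≤ (1 + 4 ^ k * k.factorial * Real.exp ((4⁻¹ : ℝ) * x ^ 2)) * Real.exp (-(2⁻¹:ℝ) * x ^ 2) :=
        mul_le_mul_of_nonneg_right hk hposE.le
    _ = Real.exp (-(2⁻¹:ℝ) * x ^ 2)
        + 4 ^ k * k.factorial * (Real.exp ((4⁻¹ : ℝ) * x ^ 2) * Real.exp (-(2⁻¹:ℝ) * x ^ 2)) := by
        ring
    _ = Real.exp (-(2⁻¹:ℝ) * x ^ 2) + 4 ^ k * k.factorial * Real.exp (-(4⁻¹:ℝ) * x ^ 2) := by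
        rw [← Real.exp_add]; ring_nf

lemma integrable_pow_mul_gpdf (k : ℕ) :
    Integrable (fun x : ℝ => x ^ k * Real.exp (-(x ^ 2) / 2)) := by
  refine Integrable.mono'
    ((integrable_exp_neg_mul_sq (by norm_num : (0:ℝ) < 2⁻¹)).add
      ((integrable_exp_neg_mul_sq (by norm_num : (0:ℝ) < 4⁻¹)).const_mul
        ((4:ℝ) ^ k * k.factorial))) ?_ ?_
  · exact (Continuous.aestronglyMeasurable (by continuity))
  · refine ae_of_all _ fun x => ?_
    have := pow_mul_exp_bound k x
    rw [Real.norm_eq_abs, Pi.add_apply]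
    refine this.trans (le_of_eq ?_)
    ring_nf

lemma integrable_pow_gauss (k : ℕ) :
    Integrable (fun x : ℝ => x ^ k) (gaussianReal 0 1) := by
  rw [gaussianReal_of_var_ne_zero 0 one_ne_zero]
  rw [integrable_withDensity_iff (measurable_gaussianPDF 0 1)
    (ae_of_all _ fun x => ENNReal.ofReal_lt_top)]
  have : ∀ x : ℝ, (gaussianPDF 0 1 x).toReal
      = (Real.sqrt (2 * Real.pi))⁻¹ * Real.exp (-(x^2)/2) := by
    intro x
    rw [gaussianPDF, ENNReal.toReal_ofReal (gaussianPDFReal_nonneg 0 1 x), gaussianPDFReal]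
    norm_num
  simp only [this]
  have := (integrable_pow_mul_gpdf k).const_mul (Real.sqrt (2 * Real.pi))⁻¹
  apply this.congr
  apply ae_of_all _ fun x => by ring


noncomputable def gmom (k : ℕ) : ℝ := ∫ z, z ^ k ∂(gaussianReal 0 1)

noncomputable def ev (n : ℕ) (a : Fin n → ℝ) (z : ℝ) : ℝ := ∑ i, a i * z ^ (i : ℕ)

lemma ev_sq_expand (n : ℕ) (a : Fin n → ℝ) (z : ℝ) :
    (ev n a z) ^ 2 = ∑ i : Fin n, ∑ j : Fin n, a i * a j * z ^ ((i : ℕ) + (j : ℕ)) := by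
  rw [ev, sq, Finset.sum_mul_sum]
  refine Finset.sum_congr rfl fun i _ => Finset.sum_congr rfl fun j _ => ?_
  rw [pow_add]; ring

lemma integrable_ev_sq (n : ℕ) (a : Fin n → ℝ) :
    Integrable (fun z => (ev n a z) ^ 2) (gaussianReal 0 1) := by
  simp only [ev_sq_expand]
  exact integrable_finset_sum _ fun i _ =>
    integrable_finset_sum _ fun j _ => (integrable_pow_gauss _).const_mul _

lemma ev_sq_integral (n : ℕ) (a : Fin n → ℝ) :
    ∫ z, (ev n a z) ^ 2 ∂(gaussianReal 0 1)
      = ∑ i : Fin n, ∑ j : Fin n, a i * a j * gmom ((i : ℕ) + (j : ℕ)) := by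
  simp only [ev_sq_expand]
  rw [integral_finset_sum _ fun i _ =>
    integrable_finset_sum _ fun j _ => (integrable_pow_gauss _).const_mul _]
  refine Finset.sum_congr rfl fun i _ => ?_
  rw [integral_finset_sum _ fun j _ => (integrable_pow_gauss _).const_mul _]
  refine Finset.sum_congr rfl fun j _ => ?_
  rw [gmom, integral_const_mul]

lemma ev_pos (n : ℕ) (a : Fin n → ℝ) (ha : a ≠ 0) :
    0 < ∫ z, (ev n a z) ^ 2 ∂(gaussianReal 0 1) := by
  rcases (integral_nonneg (f := fun z => (ev n a z) ^ 2) fun z => sq_nonneg (ev n a z)).lt_or_eq with h | h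
  · exact h
  exfalso
  have hae : (fun z => (ev n a z) ^ 2) =ᵐ[gaussianReal 0 1] 0 :=
    (integral_eq_zero_iff_of_nonneg (fun z => sq_nonneg _) (integrable_ev_sq n a)).mp h.symm
  -- the polynomial
  set p : Polynomial ℝ := ∑ i : Fin n, Polynomial.C (a i) * Polynomial.X ^ (i : ℕ) with hp
  have hev : ∀ z, p.eval z = ev n a z := by
    intro z; rw [hp, Polynomial.eval_finset_sum, ev]; simp
  have hpne : p ≠ 0 := by
    obtain ⟨i, hi⟩ := Function.ne_iff.mp ha
    intro h0
    apply hi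
    have : p.coeff i = a i := by
      rw [hp, Polynomial.finset_sum_coeff]
      rw [Finset.sum_eq_single i]
      · simp
      · intro j _ hj
        simp only [Polynomial.coeff_C_mul, Polynomial.coeff_X_pow]
        rw [if_neg (fun hh => hj (Fin.val_injective hh.symm))]
        ring
      · simp
    rw [h0] at this
    simpa [this.symm] using hi
  have hroots : Set.Finite (({z : ℝ | (ev n a z) ^ 2 ≠ 0} : Set ℝ)ᶜ) := by
    have hsub : ({z : ℝ | (ev n a z) ^ 2 ≠ 0} : Set ℝ)ᶜ ⊆ {z | p.IsRoot z} := by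
      intro z hz
      simp only [compl_setOf, mem_setOf_eq, not_not] at hz
      have : ev n a z = 0 := by
        have := sq_eq_zero_iff.mp hz; exact this
      simpa [Polynomial.IsRoot, hev z] using this
    exact Finite.subset (Polynomial.finite_setOf_isRoot hpne) hsub
  have h1 : gaussianReal 0 1 {z : ℝ | (ev n a z) ^ 2 ≠ 0} = 0 := hae
  have h2 : gaussianReal 0 1 ({z : ℝ | (ev n a z) ^ 2 ≠ 0} : Set ℝ)ᶜ = 0 :=
    gaussianReal_absolutelyContinuous 0 one_ne_zero (hroots.measure_zero _)
  have : (1 : ENNReal) ≤ 0 := by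
    calc (1:ENNReal) = gaussianReal 0 1 univ := (measure_univ).symm
    _ ≤ gaussianReal 0 1 {z : ℝ | (ev n a z) ^ 2 ≠ 0}
        + gaussianReal 0 1 ({z : ℝ | (ev n a z) ^ 2 ≠ 0} : Set ℝ)ᶜ := by
        have := measure_union_le (μ := gaussianReal 0 1)
          {z : ℝ | (ev n a z) ^ 2 ≠ 0} ({z : ℝ | (ev n a z) ^ 2 ≠ 0}ᶜ)
        simpa using this
    _ = 0 := by rw [h1, h2, add_zero]
  simp at this

lemma exists_coeff_bound (n : ℕ) (hn : 0 < n) :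
    ∃ B : ℝ, 0 < B ∧ ∀ a : Fin n → ℝ,
      (∫ z, (ev n a z) ^ 2 ∂(gaussianReal 0 1)) = 1 → ∀ i, |a i| ≤ B := by
  haveI : Nonempty (Fin n) := ⟨⟨0, hn⟩⟩
  set F : (Fin n → ℝ) → ℝ :=
    fun a => ∑ i : Fin n, ∑ j : Fin n, a i * a j * gmom ((i : ℕ) + (j : ℕ)) with hF
  have hFc : Continuous F := by
    apply continuous_finset_sum _ fun i _ => continuous_finset_sum _ fun j _ => ?_
    exact ((continuous_apply i).mul (continuous_apply j)).mul continuous_const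
  have hFsmul : ∀ (c : ℝ) (a : Fin n → ℝ), F (c • a) = c ^ 2 * F a := by
    intro c a
    rw [hF]
    simp only [Pi.smul_apply, smul_eq_mul, Finset.mul_sum]
    exact Finset.sum_congr rfl fun i _ => Finset.sum_congr rfl fun j _ => by ring
  have hsph : (Metric.sphere (0 : Fin n → ℝ) 1).Nonempty :=
    NormedSpace.sphere_nonempty.mpr zero_le_one
  obtain ⟨a₀, ha₀s, ha₀min⟩ :=
    (isCompact_sphere (0 : Fin n → ℝ) 1).exists_isMinOn hsph hFc.continuousOn
  have ha₀norm : ‖a₀‖ = 1 := by simpa using ha₀s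
  have ha₀ne : a₀ ≠ 0 := fun h => by simp [h] at ha₀norm
  have hm : 0 < F a₀ := by
    have := ev_pos n a₀ ha₀ne
    rwa [ev_sq_integral] at this
  refine ⟨Real.sqrt (1 / F a₀), Real.sqrt_pos.mpr (by positivity), ?_⟩
  intro a hint i
  have hFa : F a = 1 := by
    rw [show F a = ∫ z, (ev n a z) ^ 2 ∂(gaussianReal 0 1) from (ev_sq_integral n a).symm]
    exact hint
  have hane : a ≠ 0 := by
    intro h
    rw [h] at hFa
    simp [hF] at hFa
  have hc : 0 < ‖a‖ := norm_pos_iff.mpr hane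
  have hmem : ‖a‖⁻¹ • a ∈ Metric.sphere (0 : Fin n → ℝ) 1 := by
    simp only [Metric.mem_sphere, dist_zero_right, norm_smul, norm_inv, norm_norm]
    exact inv_mul_cancel₀ hc.ne'
  have key : ‖a‖ ^ 2 * F a₀ ≤ 1 := by
    calc ‖a‖ ^ 2 * F a₀ ≤ ‖a‖ ^ 2 * F (‖a‖⁻¹ • a) := by
          have := ha₀min hmem
          exact mul_le_mul_of_nonneg_left this (by positivity)
    _ = F (‖a‖ • ‖a‖⁻¹ • a) := (hFsmul _ _).symm
    _ = F a := by rw [smul_inv_smul₀ hc.ne']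
    _ = 1 := hFa
  have hnorm_le : ‖a‖ ≤ Real.sqrt (1 / F a₀) := by
    rw [Real.le_sqrt hc.le (by positivity)]
    rw [le_div_iff₀ hm]
    linarith
  calc |a i| = ‖a i‖ := rfl
  _ ≤ ‖a‖ := norm_le_pi_norm a i
  _ ≤ _ := hnorm_le


lemma gpdf_eq (x : ℝ) :
    gaussianPDFReal 0 1 x = (Real.sqrt (2 * π))⁻¹ * Real.exp (-(x ^ 2) / 2) := by
  rw [gaussianPDFReal]
  norm_num

lemma gpdf_even (x : ℝ) : gaussianPDFReal 0 1 (-x) = gaussianPDFReal 0 1 x := by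
  rw [gpdf_eq, gpdf_eq, neg_pow]
  norm_num

lemma gauss_tail_Ici (t : ℝ) (ht : 1 ≤ t) :
    ∫ x in Ici t, gaussianPDFReal 0 1 x ≤ Real.exp (-(t ^ 2) / 2) := by
  have hc : (Real.sqrt (2 * π))⁻¹ ≤ 1 := by
    rw [inv_le_one_iff₀]
    right
    rw [show (1:ℝ) = Real.sqrt 1 from (Real.sqrt_one).symm]
    exact Real.sqrt_le_sqrt (by nlinarith [Real.pi_gt_three])
  have hbint : IntegrableOn
      (fun x : ℝ => (Real.sqrt (2 * π))⁻¹ * (Real.exp (t - t ^ 2 / 2) * Real.exp (-x)))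
      (Ici t) := by
    have h0 : IntegrableOn (fun x : ℝ => Real.exp (-x)) (Ici t) := by
      rw [integrableOn_Ici_iff_integrableOn_Ioi]
      simpa using exp_neg_integrableOn_Ioi t one_pos
    exact (h0.const_mul _).const_mul _
  have hmono : ∫ x in Ici t, gaussianPDFReal 0 1 x ≤
      ∫ x in Ici t, (Real.sqrt (2 * π))⁻¹ * (Real.exp (t - t ^ 2 / 2) * Real.exp (-x)) := by
    refine setIntegral_mono_on ((integrable_gaussianPDFReal 0 1).integrableOn) hbint
      measurableSet_Ici ?_
    intro x hx
    rw [gpdf_eq, ← Real.exp_add]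
    apply mul_le_mul_of_nonneg_left _ (by positivity)
    apply Real.exp_le_exp.mpr
    have hx' : t ≤ x := hx
    nlinarith
  have hval : ∫ x in Ici t, (Real.sqrt (2 * π))⁻¹ * (Real.exp (t - t ^ 2 / 2) * Real.exp (-x))
      = (Real.sqrt (2 * π))⁻¹ * (Real.exp (t - t ^ 2 / 2) * Real.exp (-t)) := by
    rw [integral_const_mul, integral_const_mul, integral_Ici_eq_integral_Ioi,
      integral_exp_neg_Ioi]
  refine hmono.trans ?_
  rw [hval, ← Real.exp_add]
  have : t - t ^ 2 / 2 + -t = -(t ^ 2) / 2 := by ring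
  rw [this]
  nlinarith [Real.exp_pos (-(t^2)/2), Real.exp_pos (-(t^2)/2)]

lemma gauss_tail (t : ℝ) (ht : 1 ≤ t) :
    gaussianReal 0 1 {z : ℝ | t ≤ |z|} ≤ ENNReal.ofReal (2 * Real.exp (-(t ^ 2) / 2)) := by
  have hsub : {z : ℝ | t ≤ |z|} ⊆ Iic (-t) ∪ Ici t := by
    intro z hz
    simp only [mem_setOf_eq] at hz
    rcases abs_cases z with ⟨h1, _⟩ | ⟨h1, _⟩
    · right; exact mem_Ici.mpr (h1 ▸ hz)
    · left; rw [mem_Iic]; linarith [h1 ▸ hz]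
  have hIic : ∫ x in Iic (-t), gaussianPDFReal 0 1 x = ∫ x in Ici t, gaussianPDFReal 0 1 x := by
    rw [show (∫ x in Iic (-t), gaussianPDFReal 0 1 x)
        = ∫ x in Iic (-t), gaussianPDFReal 0 1 (-x) from
      setIntegral_congr_fun measurableSet_Iic fun x _ => (gpdf_even x).symm,
      integral_comp_neg_Iic, neg_neg, integral_Ici_eq_integral_Ioi]
  calc gaussianReal 0 1 {z : ℝ | t ≤ |z|}
      ≤ gaussianReal 0 1 (Iic (-t) ∪ Ici t) := measure_mono hsub
    _ ≤ gaussianReal 0 1 (Iic (-t)) + gaussianReal 0 1 (Ici t) := measure_union_le _ _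
    _ = ENNReal.ofReal (∫ x in Iic (-t), gaussianPDFReal 0 1 x)
        + ENNReal.ofReal (∫ x in Ici t, gaussianPDFReal 0 1 x) := by
        rw [gaussianReal_apply_eq_integral 0 one_ne_zero, gaussianReal_apply_eq_integral 0 one_ne_zero]
    _ ≤ ENNReal.ofReal (Real.exp (-(t ^ 2) / 2)) + ENNReal.ofReal (Real.exp (-(t ^ 2) / 2)) := by
        rw [hIic]
        exact add_le_add (ENNReal.ofReal_le_ofReal (gauss_tail_Ici t ht))
          (ENNReal.ofReal_le_ofReal (gauss_tail_Ici t ht))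
    _ = ENNReal.ofReal (2 * Real.exp (-(t ^ 2) / 2)) := by
        rw [← ENNReal.ofReal_add (Real.exp_pos _).le (Real.exp_pos _).le]
        ring_nf

/-- There exists a constant `C > 0` (depending only on `q`) such that for
every polynomial `r` of degree at most `q` with Gaussian mean `0` and Gaussian second moment
`1`, and every real `d ≥ 2`, the standard Gaussian measure of the set where
`|r(z)| ≥ C (log d)^(q/2)` is at most `1/d`. -/

theorem gaussian_poly_tail_bound (q : ℕ) :
    ∃ C : ℝ, 0 < C ∧
      ∀ r : Polynomial ℝ, r.natDegree ≤ q →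
        (∫ z, r.eval z ∂(gaussianReal 0 1)) = 0 →
        (∫ z, (r.eval z) ^ 2 ∂(gaussianReal 0 1)) = 1 →
        ∀ d : ℝ, 2 ≤ d →
          gaussianReal 0 1 {z : ℝ | C * Real.log d ^ ((q : ℝ) / 2) ≤ |r.eval z|}
            ≤ ENNReal.ofReal (1 / d) := by
  rcases Nat.eq_zero_or_pos q with hq0 | hqpos
  · -- q = 0 : hypotheses are contradictory
    subst hq0
    refine ⟨1, one_pos, ?_⟩
    intro r hdeg hmean hvar d hd
    exfalso
    obtain ⟨c, rfl⟩ : ∃ c, r = Polynomial.C c :=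
      ⟨r.coeff 0, (Polynomial.eq_C_of_natDegree_le_zero hdeg)⟩
    simp only [Polynomial.eval_C] at hmean hvar
    rw [integral_const] at hmean
    simp at hmean
    rw [hmean] at hvar
    simp at hvar
  · obtain ⟨B, hB, hbound⟩ := exists_coeff_bound (q + 1) (Nat.succ_pos q)
    refine ⟨(q + 1 : ℝ) * B * 2 ^ q, by positivity, ?_⟩
    intro r hdeg _hmean hvar d hd
    set a : Fin (q + 1) → ℝ := fun i => r.coeff i with ha
    have hev : ∀ z, r.eval z = ev (q + 1) a z := by
      intro z
      rw [Polynomial.eval_eq_sum_range' (Nat.lt_succ_of_le hdeg), ev,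
        Fin.sum_univ_eq_sum_range (fun i => r.coeff i * z ^ i)]
    have hint : (∫ z, (ev (q + 1) a z) ^ 2 ∂(gaussianReal 0 1)) = 1 := by
      rw [← hvar]
      congr 1
      funext z
      rw [hev]
    have hcoeff : ∀ i, |a i| ≤ B := hbound a hint
    have hd0 : (0:ℝ) < d := by linarith
    have hlogd : 0 < Real.log d := Real.log_pos (by linarith)
    have hlog4 : (1:ℝ)/4 < Real.log d := by
      have h2 : Real.log 2 ≤ Real.log d := Real.log_le_log (by norm_num) hd
      have := Real.log_two_gt_d9
      linarith
    set s : ℝ := 2 * Real.sqrt (Real.log d) with hs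
    have hs1 : 1 < s := by
      have : (1:ℝ)/2 < Real.sqrt (Real.log d) := by
        rw [show (1:ℝ)/2 = Real.sqrt ((1:ℝ)/4) by
          rw [show (1:ℝ)/4 = (1/2)^2 by norm_num, Real.sqrt_sq (by norm_num)]]
        exact Real.sqrt_lt_sqrt (by norm_num) hlog4
      rw [hs]; linarith
    -- rewrite the threshold
    have hthr : (q + 1 : ℝ) * B * 2 ^ q * Real.log d ^ ((q : ℝ) / 2)
        = (q + 1 : ℝ) * B * s ^ q := by
      have h1 : Real.log d ^ ((q : ℝ) / 2) = Real.sqrt (Real.log d) ^ q := by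
        rw [show ((q : ℝ) / 2) = (1/2 : ℝ) * (q : ℕ) by push_cast; ring,
          Real.rpow_mul hlogd.le, Real.rpow_natCast, ← Real.sqrt_eq_rpow]
      rw [h1, hs, mul_pow]
      ring
    -- pointwise bound on the polynomial
    have hptw : ∀ z : ℝ, |r.eval z| ≤ (q + 1 : ℝ) * B * (max 1 |z|) ^ q := by
      intro z
      set M : ℝ := max 1 |z| with hM
      have hM1 : (1:ℝ) ≤ M := le_max_left _ _
      rw [hev, ev]
      calc |∑ i : Fin (q+1), a i * z ^ (i:ℕ)|
          ≤ ∑ i : Fin (q+1), |a i * z ^ (i:ℕ)| := Finset.abs_sum_le_sum_abs _ _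
        _ ≤ ∑ _i : Fin (q+1), B * M ^ q := by
            refine Finset.sum_le_sum fun i _ => ?_
            rw [abs_mul, abs_pow]
            have h1 : |z| ^ (i:ℕ) ≤ M ^ (i:ℕ) :=
              pow_le_pow_left₀ (abs_nonneg z) (le_max_right _ _) _
            have h2 : M ^ (i:ℕ) ≤ M ^ q :=
              pow_le_pow_right₀ hM1 (Nat.lt_succ_iff.mp i.isLt)
            have h3 : (0:ℝ) ≤ |z| ^ (i:ℕ) := by positivity
            exact mul_le_mul (hcoeff i) (h1.trans h2) h3 hB.le
        _ = (q + 1 : ℝ) * B * M ^ q := by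
            rw [Finset.sum_const, Finset.card_univ, Fintype.card_fin]
            push_cast
            ring
    -- event inclusion
    have hincl : {z : ℝ | (q + 1 : ℝ) * B * 2 ^ q * Real.log d ^ ((q : ℝ) / 2) ≤ |r.eval z|}
        ⊆ {z : ℝ | s ≤ |z|} := by
      intro z hz
      simp only [mem_setOf_eq] at hz ⊢
      rw [hthr] at hz
      have hchain : (q + 1 : ℝ) * B * s ^ q ≤ (q + 1 : ℝ) * B * (max 1 |z|) ^ q :=
        hz.trans (hptw z)
      have hcanc : s ^ q ≤ (max 1 |z|) ^ q :=
        le_of_mul_le_mul_left hchain (by positivity : (0:ℝ) < (q + 1 : ℝ) * B)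
      have hsM : s ≤ max 1 |z| :=
        (pow_le_pow_iff_left₀ (by positivity) (by positivity) hqpos.ne').mp hcanc
      rcases max_cases 1 |z| with ⟨hm, _⟩ | ⟨hm, _⟩
      · rw [hm] at hsM; linarith
      · rw [hm] at hsM; exact hsM
    calc gaussianReal 0 1 {z : ℝ | (q + 1 : ℝ) * B * 2 ^ q * Real.log d ^ ((q : ℝ) / 2) ≤ |r.eval z|}
        ≤ gaussianReal 0 1 {z : ℝ | s ≤ |z|} := measure_mono hincl
      _ ≤ ENNReal.ofReal (2 * Real.exp (-(s ^ 2) / 2)) := gauss_tail s hs1.le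
      _ ≤ ENNReal.ofReal (1 / d) := by
          apply ENNReal.ofReal_le_ofReal
          have hsq : s ^ 2 = 4 * Real.log d := by
            rw [hs, mul_pow, Real.sq_sqrt hlogd.le]
            ring
          rw [hsq, show -(4 * Real.log d) / 2 = -(Real.log d + Real.log d) by ring,
            Real.exp_neg, Real.exp_add, Real.exp_log hd0]
          rw [show (2:ℝ) * (d * d)⁻¹ = 2 / (d * d) by ring,
            div_le_div_iff₀ (by positivity) hd0]
          nlinarith
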